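/- Let (X, μ) be a measure space with μ(X) < ∞, let D > 0, let 𝓑 be a finite family of measurable subsets of X, and let C be a map assigning to each B ∈ 𝓑 a measurable set C(B) ⊆ B such that the sets {C(B) : B ∈ 𝓑} are pairwise disjoint and μ(B) ≤ D·μ(C(B)) for every B ∈ 𝓑. Let Δ ⊆ X be a measurable set with Δ ∩ C(B) = ∅ for every B ∈ 𝓑. Then for every integer k ≥ 1, μ({x ∈ Δ : there exist B_1, B_2, …, B_k ∈ 𝓑 with B_1 ⊋ B_2 ⊋ ⋯ ⊋ B_k (strict inclusions) and x ∈ B_k}) ≤ (D/(D+1))^k · μ(X). -/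

import Mathlib

open MeasureTheory

open scoped Classical ENNReal

/-- A strictly decreasing chain of length `m` in `𝓑` ending at `B`. -/
def ChainTo {X : Type*} (𝓑 : Finset (Set X)) (B : Set X) (m : ℕ) : Prop :=
  0 < m ∧ ∃ c : ℕ → Set X, (∀ i, i < m → c i ∈ 𝓑) ∧
    (∀ i j, i < j → j < m → c j ⊂ c i) ∧ c (m - 1) = B

/-- Maximal length of a strictly decreasing chain in `𝓑` ending at `B`. -/
noncomputable def chainDepth {X : Type*} (𝓑 : Finset (Set X)) (B : Set X) : ℕ :=
  Nat.findGreatest (ChainTo 𝓑 B) 𝓑.card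

lemma ChainTo.le_card {X : Type*} {𝓑 : Finset (Set X)} {B : Set X} {m : ℕ}
    (h : ChainTo 𝓑 B m) : m ≤ 𝓑.card := by
  obtain ⟨hm, c, hmem, hstrict, -⟩ := h
  have hcard : (Finset.range m).card ≤ 𝓑.card := by
    apply Finset.card_le_card_of_injOn c (fun i hi => hmem i (Finset.mem_range.1 hi))
    intro i hi j hj hij
    by_contra hne
    rcases lt_or_gt_of_ne hne with h | h
    · exact (hstrict i j h (by simpa using hj)).ne hij.symm
    · exact (hstrict j i h (by simpa using hi)).ne hij
  simpa using hcard

lemma le_chainDepth {X : Type*} {𝓑 : Finset (Set X)} {B : Set X} {m : ℕ}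
    (h : ChainTo 𝓑 B m) : m ≤ chainDepth 𝓑 B := by
  by_contra hlt
  push_neg at hlt
  exact Nat.findGreatest_is_greatest hlt h.le_card h

lemma chainDepth_spec {X : Type*} {𝓑 : Finset (Set X)} {B : Set X} (hB : B ∈ 𝓑) :
    ChainTo 𝓑 B (chainDepth 𝓑 B) := by
  have h1 : ChainTo 𝓑 B 1 :=
    ⟨one_pos, fun _ => B, fun i _ => hB, fun i j hij hj => absurd hj (by omega), rfl⟩
  exact Nat.findGreatest_spec (Finset.card_pos.2 ⟨B, hB⟩) h1

/-- If `B` has depth at least `j ≥ 1`, there is `B' ⊇ B` of depth exactly `j`. -/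
lemma exists_chainDepth_eq {X : Type*} {𝓑 : Finset (Set X)} {B : Set X} (hB : B ∈ 𝓑)
    {j : ℕ} (hj1 : 1 ≤ j) (hjd : j ≤ chainDepth 𝓑 B) :
    ∃ B' ∈ 𝓑, chainDepth 𝓑 B' = j ∧ B ⊆ B' := by
  obtain ⟨hmpos, c, hmem, hstrict, hlast⟩ := chainDepth_spec hB
  set m := chainDepth 𝓑 B with hm
  refine ⟨c (j - 1), hmem _ (by omega), ?_, ?_⟩
  · -- depth of c (j-1) is exactly j
    have hge : j ≤ chainDepth 𝓑 (c (j - 1)) :=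
      le_chainDepth ⟨by omega, c, fun i hi => hmem i (by omega),
        fun a b hab hb => hstrict a b hab (by omega), rfl⟩
    refine le_antisymm ?_ hge
    by_contra hlt
    push_neg at hlt
    rcases eq_or_lt_of_le hjd with hjm | hjm
    · have hcB : c (j - 1) = B := by rw [hjm]; exact hlast
      rw [hcB] at hlt
      omega
    · obtain ⟨hm'pos, c', hmem', hstrict', hlast'⟩ := chainDepth_spec (hmem (j - 1) (by omega))
      set m' := chainDepth 𝓑 (c (j - 1)) with hm'
      have hord : ∀ a, a < m' → c (j - 1) ⊆ c' a := by
        intro a ha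
        rcases eq_or_lt_of_le (show a ≤ m' - 1 by omega) with h | h
        · rw [h, hlast']
        · have h2 : c' (m' - 1) ⊂ c' a := hstrict' a (m' - 1) h (by omega)
          rw [hlast'] at h2
          exact h2.subset
      have hchain : ChainTo 𝓑 B (m' + (m - j)) := by
        refine ⟨by omega, fun i => if i < m' then c' i else c (j + (i - m')), ?_, ?_, ?_⟩
        · intro i hi
          by_cases h : i < m'
          · simpa [h] using hmem' i h
          · simpa [h] using hmem _ (by omega)
        · intro a b hab hb
          by_cases hbm : b < m'
          · have ham : a < m' := lt_trans hab hbm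
            simpa [ham, hbm] using hstrict' a b hab hbm
          · have hblt : j + (b - m') < m := by omega
            have h1 : c (j + (b - m')) ⊂ c (j - 1) := hstrict (j - 1) (j + (b - m')) (by omega) hblt
            by_cases ham : a < m'
            · have : c (j + (b - m')) ⊂ c' a := h1.trans_subset (hord a ham)
              simpa [ham, hbm] using this
            · have : c (j + (b - m')) ⊂ c (j + (a - m')) :=
                hstrict (j + (a - m')) (j + (b - m')) (by omega) hblt
              simpa [ham, hbm] using this
        · have h1 : ¬ (m' + (m - j) - 1 < m') := by omega
          simp only [h1, if_false]
          have h2 : j + (m' + (m - j) - 1 - m') = m - 1 := by omega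
          rw [h2, hlast]
      have := le_chainDepth hchain
      omega
  · -- B ⊆ c (j - 1)
    rcases eq_or_lt_of_le hjd with hjm | hjm
    · rw [hjm, ← hlast]
    · have h1 : c (m - 1) ⊂ c (j - 1) := hstrict (j - 1) (m - 1) (by omega) (by omega)
      rw [hlast] at h1
      exact h1.subset

/-- Abstract measure-theoretic core of Lemma Z₂. -/
theorem chain_measure_estimate {X : Type*} [MeasurableSpace X] (μ : Measure X)
    [IsFiniteMeasure μ] (D : ℝ) (hD : 0 < D) (𝓑 : Finset (Set X)) (C : Set X → Set X)
    (hmeasB : ∀ B ∈ 𝓑, MeasurableSet B)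
    (hmeasC : ∀ B ∈ 𝓑, MeasurableSet (C B))
    (hCsub : ∀ B ∈ 𝓑, C B ⊆ B)
    (hdisj : ∀ B ∈ 𝓑, ∀ B' ∈ 𝓑, B ≠ B' → Disjoint (C B) (C B'))
    (hbound : ∀ B ∈ 𝓑, μ B ≤ ENNReal.ofReal D * μ (C B))
    (Δ : Set X) (hΔmeas : MeasurableSet Δ)
    (hΔ : ∀ B ∈ 𝓑, Δ ∩ C B = ∅)
    (k : ℕ) (hk : 1 ≤ k) :
    μ {x ∈ Δ | ∃ B : Fin k → Set X, (∀ i, B i ∈ 𝓑) ∧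
        (∀ i j : Fin k, i < j → B j ⊂ B i) ∧ x ∈ B ⟨k - 1, by omega⟩} ≤
      ENNReal.ofReal ((D / (D + 1)) ^ k) * μ Set.univ := by
  classical
  have key : ∀ E : Set X, E ⊆ Δ → (∀ x ∈ E, ∃ B₀ ∈ 𝓑, x ∈ B₀ ∧ k ≤ chainDepth 𝓑 B₀) →
      μ E ≤ ENNReal.ofReal ((D / (D + 1)) ^ k) * μ Set.univ := by
    intro E hEΔ hEdepth
    set D' : ℝ≥0∞ := ENNReal.ofReal D with hD'def
    have hD't : D' ≠ ∞ := ENNReal.ofReal_ne_top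
    set F : ℕ → Finset (Set X) := fun i => 𝓑.filter fun B => chainDepth 𝓑 B = i with hF
    set K : ℕ → Set X := fun i => ⋃ B ∈ F i, C B with hK
    set L : ℕ → Set X := fun i => ⋃ B ∈ F i, B with hL
    set s : ℕ → ℝ≥0∞ := fun j => ∑ i ∈ Finset.Icc j k, μ (K i) with hs
    have hFmem : ∀ i, ∀ B ∈ F i, B ∈ 𝓑 ∧ chainDepth 𝓑 B = i := by
      intro i B h
      simpa [hF, Finset.mem_filter] using h
    have hKmeas : ∀ i, MeasurableSet (K i) := fun i =>
      (F i).measurableSet_biUnion fun B hB => hmeasC B (hFmem i B hB).1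
    have hKdisj : ∀ i i', i ≠ i' → Disjoint (K i) (K i') := by
      intro i i' hii
      simp only [hK, Set.disjoint_iUnion_left, Set.disjoint_iUnion_right]
      intro B' hB' B hB
      refine hdisj B (hFmem i B hB).1 B' (hFmem i' B' hB').1 fun hBB => hii ?_
      rw [← (hFmem i B hB).2, hBB, (hFmem i' B' hB').2]
    have hEK : ∀ i, Disjoint E (K i) := by
      intro i
      simp only [hK, Set.disjoint_iUnion_right]
      intro B hB
      refine Set.disjoint_left.2 fun x hx hxC => ?_
      have hmem : x ∈ Δ ∩ C B := ⟨hEΔ hx, hxC⟩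
      rw [hΔ B (hFmem i B hB).1] at hmem
      exact hmem
    have hLK : ∀ i, μ (L i) ≤ D' * μ (K i) := by
      intro i
      have h3 : μ (K i) = ∑ B ∈ F i, μ (C B) := by
        rw [hK]
        exact measure_biUnion_finset
          (fun B hB B' hB' hne => hdisj B (hFmem i B hB).1 B' (hFmem i B' hB').1 hne)
          (fun B hB => hmeasC B (hFmem i B hB).1)
      calc μ (L i) ≤ ∑ B ∈ F i, μ B := measure_biUnion_finset_le _ _
        _ ≤ ∑ B ∈ F i, D' * μ (C B) := Finset.sum_le_sum fun B hB => hbound B (hFmem i B hB).1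
        _ = D' * ∑ B ∈ F i, μ (C B) := by rw [Finset.mul_sum]
        _ = D' * μ (K i) := by rw [h3]
    have hsub : ∀ j, 1 ≤ j → j ≤ k → E ∪ ⋃ i ∈ Finset.Icc j k, K i ⊆ L j := by
      intro j hj1 hjk
      have hLmem : ∀ B', B' ∈ 𝓑 → chainDepth 𝓑 B' = j → B' ⊆ L j := by
        intro B' h1 h2
        have hBF : B' ∈ F j := by simp [hF, Finset.mem_filter, h1, h2]
        rw [hL]
        intro y hy
        exact Set.mem_biUnion hBF hy
      rintro x (hx | hx)
      · obtain ⟨B₀, hB₀, hxB₀, hdep⟩ := hEdepth x hx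
        obtain ⟨B', hB', hdep', hsubB⟩ := exists_chainDepth_eq hB₀ hj1 (le_trans hjk hdep)
        exact hLmem B' hB' hdep' (hsubB hxB₀)
      · simp only [Set.mem_iUnion] at hx
        obtain ⟨i, hi, hxK⟩ := hx
        simp only [hK, Set.mem_iUnion] at hxK
        obtain ⟨B, hB, hxC⟩ := hxK
        obtain ⟨hB𝓑, hBd⟩ := hFmem i B hB
        have hji : j ≤ chainDepth 𝓑 B := by
          rw [hBd]; exact (Finset.mem_Icc.1 hi).1
        obtain ⟨B', hB', hdep', hsubB⟩ := exists_chainDepth_eq hB𝓑 hj1 hji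
        exact hLmem B' hB' hdep' (hsubB (hCsub B hB𝓑 hxC))
    have hadd : ∀ j, μ (E ∪ ⋃ i ∈ Finset.Icc j k, K i) = μ E + s j := by
      intro j
      have hU : μ (⋃ i ∈ Finset.Icc j k, K i) = s j := by
        rw [hs]
        exact measure_biUnion_finset (fun i _ i' _ hne => hKdisj i i' hne) fun i _ => hKmeas i
      rw [measure_union ?_ ((Finset.Icc j k).measurableSet_biUnion fun i _ => hKmeas i), hU]
      simp only [Set.disjoint_iUnion_right]
      exact fun i _ => hEK i
    have hbase : ∀ j, 1 ≤ j → j ≤ k → μ E + s j ≤ D' * μ (K j) := by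
      intro j hj1 hjk
      calc μ E + s j = μ (E ∪ ⋃ i ∈ Finset.Icc j k, K i) := (hadd j).symm
        _ ≤ μ (L j) := measure_mono (hsub j hj1 hjk)
        _ ≤ D' * μ (K j) := hLK j
    have hsplit : ∀ j, j ≤ k → s j = μ (K j) + s (j + 1) := by
      intro j hjk
      have hins : Finset.Icc j k = insert j (Finset.Icc (j + 1) k) := by
        ext x
        simp only [Finset.mem_Icc, Finset.mem_insert]
        omega
      rw [hs]
      simp only
      rw [hins, Finset.sum_insert (by simp [Finset.mem_Icc])]
    have hrec : ∀ j, 1 ≤ j → j ≤ k → μ E + (D' + 1) * s (j + 1) ≤ D' * s j := by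
      intro j hj1 hjk
      have h1 : μ E + s j ≤ D' * μ (K j) := hbase j hj1 hjk
      have h2 : s (j + 1) ≤ s j := by
        rw [hsplit j hjk]; exact le_add_self
      calc μ E + (D' + 1) * s (j + 1) = (μ E + s (j + 1)) + D' * s (j + 1) := by ring
        _ ≤ (μ E + s j) + D' * s (j + 1) := by gcongr
        _ ≤ D' * μ (K j) + D' * s (j + 1) := by gcongr
        _ = D' * s j := by rw [hsplit j hjk]; ring
    have hstop : s (k + 1) = 0 := by
      rw [hs]
      simp [Finset.Icc_eq_empty_of_lt (by omega : k < k + 1)]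
    have hQ : ∀ m, 1 ≤ m → m ≤ k → (D' + 1) ^ m * μ E ≤ D' ^ m * (s (k + 1 - m) + μ E) := by
      intro m
      induction m with
      | zero => intro h; exact absurd h (by omega)
      | succ n ih =>
        intro h1 hk'
        by_cases hn : n = 0
        · subst hn
          have h := hrec k hk le_rfl
          rw [hstop, mul_zero, add_zero] at h
          have hidx : k + 1 - 1 = k := by omega
          rw [hidx]
          calc (D' + 1) ^ 1 * μ E = μ E + D' * μ E := by ring
            _ ≤ D' * s k + D' * μ E := by gcongr
            _ = D' ^ 1 * (s k + μ E) := by ring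
        · have hn1 : 1 ≤ n := by omega
          have ihn := ih hn1 (by omega)
          have hkn : k + 1 - n = (k - n) + 1 := by omega
          have hkn' : k + 1 - (n + 1) = k - n := by omega
          rw [hkn] at ihn
          rw [hkn']
          have hr := hrec (k - n) (by omega) (by omega)
          calc (D' + 1) ^ (n + 1) * μ E = (D' + 1) * ((D' + 1) ^ n * μ E) := by ring
            _ ≤ (D' + 1) * (D' ^ n * (s (k - n + 1) + μ E)) := mul_le_mul_right ihn _
            _ = D' ^ n * ((μ E + (D' + 1) * s (k - n + 1)) + D' * μ E) := by ring
            _ ≤ D' ^ n * (D' * s (k - n) + D' * μ E) :=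
              mul_le_mul_right (by gcongr) _
            _ = D' ^ (n + 1) * (s (k - n) + μ E) := by ring
    have hfin : s 1 + μ E ≤ μ (Set.univ : Set X) := by
      rw [add_comm, ← hadd 1]
      exact measure_mono (Set.subset_univ _)
    have hmain : (D' + 1) ^ k * μ E ≤ D' ^ k * μ (Set.univ : Set X) := by
      have hq := hQ k hk le_rfl
      have hidx : k + 1 - k = 1 := by omega
      rw [hidx] at hq
      exact hq.trans (mul_le_mul_right hfin _)
    -- convert to the stated form
    have hq1 : ENNReal.ofReal (D / (D + 1)) * (D' + 1) = D' := by
      have h1 : D' + 1 = ENNReal.ofReal (D + 1) := by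
        rw [ENNReal.ofReal_add hD.le zero_le_one, ENNReal.ofReal_one]
      rw [h1, ← ENNReal.ofReal_mul (by positivity)]
      congr 1
      field_simp
    rw [ENNReal.ofReal_pow (by positivity)]
    have h2 : (D' + 1) ^ k * μ E ≤
        (D' + 1) ^ k * (ENNReal.ofReal (D / (D + 1)) ^ k * μ Set.univ) := by
      calc (D' + 1) ^ k * μ E ≤ D' ^ k * μ Set.univ := hmain
        _ = (ENNReal.ofReal (D / (D + 1)) * (D' + 1)) ^ k * μ Set.univ := by rw [hq1]
        _ = (D' + 1) ^ k * (ENNReal.ofReal (D / (D + 1)) ^ k * μ Set.univ) := by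
            rw [mul_pow]; ring
    have hne0 : ((D' + 1) ^ k : ℝ≥0∞) ≠ 0 := pow_ne_zero _ (by simp)
    have hnet : ((D' + 1) ^ k : ℝ≥0∞) ≠ ∞ :=
      ENNReal.pow_ne_top (ENNReal.add_ne_top.2 ⟨hD't, ENNReal.one_ne_top⟩)
    exact (ENNReal.mul_le_mul_iff_right hne0 hnet).1 h2
  apply key
  · exact Set.sep_subset _ _
  · rintro x ⟨hxΔ, B, hBmem, hBchain, hxB⟩
    refine ⟨B ⟨k - 1, by omega⟩, hBmem _, hxB, ?_⟩
    apply le_chainDepth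
    refine ⟨by omega, fun i => B ⟨min i (k - 1), by omega⟩, fun i _ => hBmem _, ?_, ?_⟩
    · intro a b hab hb
      exact hBchain _ _ (Fin.mk_lt_mk.mpr (by omega))
    · exact congrArg B (Fin.ext (min_self _))
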